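/- A labeled graph G = ([n], E) is u-representable if and only if its supplement \bar{G} is u^c-representable, where the supplement \bar{G} = ([n], \bar{E}) has xy in \bar{E} if and only if (n+1-x)(n+1-y) is in E, and u^c swaps letters 1 and 2 in u. -/

import Mathlib

/-- `red w` replaces each occurrence of the `i`-th smallest letter of `w` by `i`. -/
def red (w : List ℕ) : List ℕ :=
  w.map (fun x => (w.toFinset.filter (· < x)).card + 1)

/-- `w` has a `u`-match (starting at some position `i`): a factor of `w` of length `|u|`
whose reduction equals `red u` (which is `u` itself when `red u = u`). -/
def HasMatch (u w : List ℕ) : Prop :=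
  ∃ i, i + u.length ≤ w.length ∧ red ((w.drop i).take u.length) = red u

/-- The word `w` `u`-represents the labeled graph with vertex set `V` and adjacency `E`:
the letters occurring in `w` are exactly `V`, and two distinct vertices are adjacent
iff `w` restricted to these two letters has no `u`-match. -/
def Represents (u w : List ℕ) (V : Finset ℕ) (E : ℕ → ℕ → Prop) : Prop :=
  (∀ x, x ∈ w ↔ x ∈ V) ∧
  ∀ x ∈ V, ∀ y ∈ V, x ≠ y →
    (E x y ↔ ¬ HasMatch u (w.filter (fun z => z = x ∨ z = y)))

lemma red_length (t : List ℕ) : (red t).length = t.length := List.length_map _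

lemma red_of_two (t : List ℕ) (a b : ℕ) (hab : a < b) (ht : ∀ x ∈ t, x = a ∨ x = b)
    (ha : a ∈ t) (hb : b ∈ t) :
    red t = t.map (fun x => if x = a then 1 else 2) := by
  unfold red
  apply List.map_congr_left
  intro x hx
  rcases ht x hx with rfl | rfl
  · simp only [if_pos rfl]
    have : t.toFinset.filter (· < x) = ∅ := by
      apply Finset.filter_eq_empty_iff.2
      intro y hy
      rcases ht y (List.mem_toFinset.1 hy) with rfl | rfl <;> omega
    simp [this]
  · have hne : x ≠ a := by omega
    simp only [if_neg hne]
    have : t.toFinset.filter (· < x) = {a} := by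
      ext y
      simp only [Finset.mem_filter, List.mem_toFinset, Finset.mem_singleton]
      constructor
      · rintro ⟨hy, hlt⟩
        rcases ht y hy with rfl | rfl <;> omega
      · rintro rfl
        exact ⟨ha, hab⟩
    simp [this]

lemma red_of_const (t : List ℕ) (a : ℕ) (ht : ∀ x ∈ t, x = a) :
    red t = List.replicate t.length 1 := by
  unfold red
  have : (List.map (fun x => (t.toFinset.filter (· < x)).card + 1) t).length = t.length :=
    List.length_map _
  rw [← this]
  apply List.eq_replicate_of_mem
  intro y hy
  rcases List.mem_map.1 hy with ⟨x, hx, rfl⟩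
  have hxa := ht x hx
  subst hxa
  have : t.toFinset.filter (· < x) = ∅ := by
    apply Finset.filter_eq_empty_iff.2
    intro y hy
    have := ht y (List.mem_toFinset.1 hy)
    omega
  simp [this]

lemma const_of_red_replicate (t : List ℕ) (h : red t = List.replicate t.length 1) :
    ∀ x ∈ t, ∀ y ∈ t, x = y := by
  intro x hx y hy
  by_contra hxy
  -- wlog x < y
  rcases Nat.lt_or_ge x y with hlt | hge
  · have hmem : ((t.toFinset.filter (· < y)).card + 1) ∈ red t :=
      List.mem_map.2 ⟨y, hy, rfl⟩
    rw [h] at hmem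
    have := List.eq_of_mem_replicate hmem
    have hpos : 0 < (t.toFinset.filter (· < y)).card :=
      Finset.card_pos.2 ⟨x, Finset.mem_filter.2 ⟨List.mem_toFinset.2 hx, by simpa using hlt⟩⟩
    omega
  · have hlt : y < x := by omega
    have hmem : ((t.toFinset.filter (· < x)).card + 1) ∈ red t :=
      List.mem_map.2 ⟨x, hx, rfl⟩
    rw [h] at hmem
    have := List.eq_of_mem_replicate hmem
    have hpos : 0 < (t.toFinset.filter (· < x)).card :=
      Finset.card_pos.2 ⟨y, Finset.mem_filter.2 ⟨List.mem_toFinset.2 hy, by simpa using hlt⟩⟩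
    omega

lemma double_comp (l : List ℕ) (hl : ∀ x ∈ l, x = 1 ∨ x = 2) :
    (l.map (fun x => 3 - x)).map (fun x => 3 - x) = l := by
  rw [List.map_map]
  conv_rhs => rw [← List.map_id l]
  apply List.map_congr_left
  intro x hx
  rcases hl x hx with rfl | rfl <;> rfl

/-- Key lemma : complementation of both pattern and two-letter word preserves matching. -/
lemma key (u t : List ℕ) (a b : ℕ) (hab : a < b) (f : ℕ → ℕ) (hf : f b < f a)
    (hu : ∀ x ∈ u, x = 1 ∨ x = 2) (hne : u ≠ [])
    (ht : ∀ x ∈ t, x = a ∨ x = b) (hlt : t.length = u.length) :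
    red (t.map f) = red (u.map (fun x => 3 - x)) ↔ red t = red u := by
  have htf : ∀ x ∈ t.map f, x = f b ∨ x = f a := by
    intro x hx
    rcases List.mem_map.1 hx with ⟨y, hy, rfl⟩
    rcases ht y hy with rfl | rfl
    · right; rfl
    · left; rfl
  by_cases h12 : 1 ∈ u ∧ 2 ∈ u
  · obtain ⟨h1, h2⟩ := h12
    -- red u = u, red u^c = u^c
    have hru : red u = u := by
      rw [red_of_two u 1 2 one_lt_two hu h1 h2]
      conv_rhs => rw [← List.map_id u]
      apply List.map_congr_left
      intro x hx
      rcases hu x hx with rfl | rfl <;> rfl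
    have huc : ∀ x ∈ u.map (fun x => 3 - x), x = 1 ∨ x = 2 := by
      intro x hx
      rcases List.mem_map.1 hx with ⟨y, hy, rfl⟩
      rcases hu y hy with rfl | rfl
      · right; rfl
      · left; rfl
    have h1c : (1 : ℕ) ∈ u.map (fun x => 3 - x) := List.mem_map.2 ⟨2, h2, rfl⟩
    have h2c : (2 : ℕ) ∈ u.map (fun x => 3 - x) := List.mem_map.2 ⟨1, h1, rfl⟩
    have hruc : red (u.map (fun x => 3 - x)) = u.map (fun x => 3 - x) := by
      rw [red_of_two _ 1 2 one_lt_two huc h1c h2c]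
      conv_rhs => rw [← List.map_id (u.map (fun x => 3 - x))]
      apply List.map_congr_left
      intro x hx
      rcases huc x hx with rfl | rfl <;> rfl
    rw [hru, hruc]
    by_cases hta : a ∈ t ∧ b ∈ t
    · obtain ⟨ha, hb⟩ := hta
      have hfab : f a ≠ f b := by omega
      have hrt : red t = t.map (fun x => if x = a then 1 else 2) :=
        red_of_two t a b hab ht ha hb
      have hrtf : red (t.map f) = t.map (fun x => if x = a then 2 else 1) := by
        rw [red_of_two (t.map f) (f b) (f a) hf htf
          (List.mem_map.2 ⟨b, hb, rfl⟩) (List.mem_map.2 ⟨a, ha, rfl⟩)]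
        rw [List.map_map]
        apply List.map_congr_left
        intro x hx
        by_cases hxa : x = a
        · subst hxa; simp [Function.comp, hfab]
        · have hxb : x = b := (ht x hx).resolve_left hxa
          subst hxb; simp [Function.comp, hxa]
    -- red (t.map f) = (red t)^c
      have hcc : red (t.map f) = (red t).map (fun x => 3 - x) := by
        rw [hrt, hrtf, List.map_map]
        apply List.map_congr_left
        intro x hx
        by_cases hxa : x = a
        · subst hxa; simp [Function.comp]
        · have hxb : x = b := (ht x hx).resolve_left hxa
          subst hxb; simp [Function.comp, hxa]
      rw [hcc]
      constructor
      · intro h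
        have := congrArg (List.map (fun x => 3 - x)) h
        rwa [double_comp _ (by
            rw [hrt]
            intro x hx
            rcases List.mem_map.1 hx with ⟨y, hy, rfl⟩
            by_cases hya : y = a <;> simp [hya]),
          double_comp _ hu] at this
      · intro h; rw [h]
    · -- t is constant; both sides fail since u and u^c contain a 2
      have hconst : ∀ x ∈ t, ∀ y ∈ t, x = y := by
        intro x hx y hy
        rcases ht x hx with rfl | rfl <;> rcases ht y hy with rfl | rfl <;>
          first
            | rfl
            | (exfalso; exact hta ⟨by assumption, by assumption⟩)
            | (exfalso; exact hta ⟨by assumption, by assumption⟩)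
      have htlen : t ≠ [] := by
        intro h; rw [h] at hlt; exact hne (List.length_eq_zero_iff.1 hlt.symm)
      obtain ⟨x0, hx0⟩ := List.exists_mem_of_ne_nil t htlen
      have hrt : red t = List.replicate t.length 1 :=
        red_of_const t x0 (fun x hx => hconst x hx x0 hx0)
      have hrtf : red (t.map f) = List.replicate t.length 1 := by
        have := red_of_const (t.map f) (f x0) (by
          intro x hx
          rcases List.mem_map.1 hx with ⟨y, hy, rfl⟩
          rw [hconst y hy x0 hx0])
        rwa [List.length_map] at this
      constructor
      · intro h
        exfalso
        have : (2 : ℕ) ∈ red (t.map f) := h ▸ hruc ▸ h2c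
        rw [hrtf] at this
        have := List.eq_of_mem_replicate this
        omega
      · intro h
        exfalso
        have : (2 : ℕ) ∈ red t := h ▸ h2
        rw [hrt] at this
        have := List.eq_of_mem_replicate this
        omega
  · -- u is constant
    have huconst : ∀ x ∈ u, ∀ y ∈ u, x = y := by
      intro x hx y hy
      rcases hu x hx with rfl | rfl <;> rcases hu y hy with rfl | rfl <;>
        first
          | rfl
          | (exfalso; exact h12 ⟨by assumption, by assumption⟩)
    obtain ⟨y0, hy0⟩ := List.exists_mem_of_ne_nil u hne
    have hru : red u = List.replicate u.length 1 :=
      red_of_const u y0 (fun x hx => huconst x hx y0 hy0)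
    have hruc : red (u.map (fun x => 3 - x)) = List.replicate u.length 1 := by
      have := red_of_const (u.map (fun x => 3 - x)) (3 - y0) (by
        intro x hx
        rcases List.mem_map.1 hx with ⟨y, hy, rfl⟩
        rw [huconst y hy y0 hy0])
      rwa [List.length_map] at this
    rw [hru, hruc, ← hlt]
    have hmaplen : (t.map f).length = t.length := List.length_map _
    constructor
    · intro h
      -- t.map f is constant, hence t is constant
      have hc := const_of_red_replicate (t.map f) (by rw [hmaplen]; exact h)
      have hconst : ∀ x ∈ t, ∀ y ∈ t, x = y := by
        intro x hx y hy
        by_contra hxy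
        have hfxy : f x = f y :=
          hc (f x) (List.mem_map.2 ⟨x, hx, rfl⟩) (f y) (List.mem_map.2 ⟨y, hy, rfl⟩)
        rcases ht x hx with rfl | rfl <;> rcases ht y hy with rfl | rfl <;> omega
      have htlen : t ≠ [] := by
        intro hh; rw [hh] at hlt; exact hne (List.length_eq_zero_iff.1 hlt.symm)
      obtain ⟨x0, hx0⟩ := List.exists_mem_of_ne_nil t htlen
      exact red_of_const t x0 (fun x hx => hconst x hx x0 hx0)
    · intro h
      have hc := const_of_red_replicate t h
      have htlen : t ≠ [] := by
        intro hh; rw [hh] at hlt; exact hne (List.length_eq_zero_iff.1 hlt.symm)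
      obtain ⟨x0, hx0⟩ := List.exists_mem_of_ne_nil t htlen
      have := red_of_const (t.map f) (f x0) (by
        intro x hx
        rcases List.mem_map.1 hx with ⟨y, hy, rfl⟩
        rw [hc y hy x0 hx0])
      rwa [hmaplen] at this

lemma hasmatch_map (u v : List ℕ) (a b : ℕ) (hab : a < b) (f : ℕ → ℕ) (hf : f b < f a)
    (hu : ∀ x ∈ u, x = 1 ∨ x = 2) (hne : u ≠ [])
    (hv : ∀ x ∈ v, x = a ∨ x = b) :
    HasMatch (u.map (fun x => 3 - x)) (v.map f) ↔ HasMatch u v := by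
  unfold HasMatch
  simp only [List.length_map]
  apply exists_congr
  intro i
  apply and_congr_right
  intro hi
  have hfac : ((v.map f).drop i).take u.length = (((v.drop i).take u.length).map f) := by
    rw [← List.map_drop, ← List.map_take]
  rw [hfac]
  apply key u _ a b hab f hf hu hne
  · intro x hx
    exact hv x (List.mem_of_mem_drop (List.mem_of_mem_take hx))
  · rw [List.length_take, List.length_drop]
    omega

lemma represents_congr (u w : List ℕ) (V : Finset ℕ) (E E' : ℕ → ℕ → Prop)
    (hE : ∀ x ∈ V, ∀ y ∈ V, (E x y ↔ E' x y)) (h : Represents u w V E) :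
    Represents u w V E' := by
  obtain ⟨h1, h2⟩ := h
  refine ⟨h1, fun x hx y hy hxy => ?_⟩
  rw [← hE x hx y hy]
  exact h2 x hx y hy hxy

/-- One direction of the theorem. -/
lemma dir (n : ℕ) (u : List ℕ) (hu : ∀ x ∈ u, x = 1 ∨ x = 2) (hne : u ≠ [])
    (E : ℕ → ℕ → Prop) (h : ∃ w, Represents u w (Finset.Icc 1 n) E) :
    ∃ w, Represents (u.map (fun x => 3 - x)) w (Finset.Icc 1 n)
      (fun x y => E (n + 1 - x) (n + 1 - y)) := by
  obtain ⟨w, hw1, hw2⟩ := h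
  refine ⟨w.map (fun z => n + 1 - z), ?_, ?_⟩
  · intro x
    simp only [List.mem_map]
    constructor
    · rintro ⟨z, hz, rfl⟩
      have := (hw1 z).1 hz
      simp only [Finset.mem_Icc] at this ⊢
      omega
    · intro hx
      simp only [Finset.mem_Icc] at hx
      refine ⟨n + 1 - x, (hw1 _).2 ?_, by omega⟩
      simp only [Finset.mem_Icc]
      omega
  · intro x hx y hy hxy
    simp only [Finset.mem_Icc] at hx hy
    set p := n + 1 - x with hp
    set q := n + 1 - y with hq
    have hpq : p ≠ q := by omega
    have hpmem : p ∈ Finset.Icc 1 n := by simp only [Finset.mem_Icc]; omega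
    have hqmem : q ∈ Finset.Icc 1 n := by simp only [Finset.mem_Icc]; omega
    have hE := hw2 p hpmem q hqmem hpq
    have hfilter : (w.map (fun z => n + 1 - z)).filter (fun z => z = x ∨ z = y)
        = (w.filter (fun z => z = p ∨ z = q)).map (fun z => n + 1 - z) := by
      rw [List.filter_map]
      congr 1
      apply List.filter_congr
      intro z hz
      have hzb := (hw1 z).1 hz
      simp only [Finset.mem_Icc] at hzb
      simp only [Function.comp, decide_eq_decide]
      constructor
      · rintro (h | h) <;> [left; right] <;> omega
      · rintro (h | h) <;> [left; right] <;> omega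
    have hvmem : ∀ z ∈ w.filter (fun z => z = p ∨ z = q), z = p ∨ z = q := by
      intro z hz
      have := List.of_mem_filter hz
      simpa using this
    have hmatch : HasMatch (u.map (fun x => 3 - x))
        ((w.map (fun z => n + 1 - z)).filter (fun z => z = x ∨ z = y))
        ↔ HasMatch u (w.filter (fun z => z = p ∨ z = q)) := by
      rw [hfilter]
      rcases Nat.lt_or_ge p q with hlt | hge
      · exact hasmatch_map u _ p q hlt _ (by omega) hu hne hvmem
      · exact hasmatch_map u _ q p (by omega) _ (by omega) hu hne
          (fun z hz => (hvmem z hz).symm)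
    show E p q ↔ _
    rw [hE]
    exact not_congr hmatch.symm

/-- a labeled graph `([n], E)` is `u`-representable iff its supplement
(`x` adjacent to `y` iff `n+1-x` adjacent to `n+1-y` in `G`) is `u^c`-representable,
where `u^c` swaps the letters 1 and 2. -/
theorem representable_iff_supplement (n : ℕ) (u : List ℕ)
    (hu : ∀ x ∈ u, x = 1 ∨ x = 2) (hred : red u = u) (hlen : 2 ≤ u.length)
    (E : ℕ → ℕ → Prop) (hsym : Symmetric E) (hirr : ∀ x, ¬ E x x) :
    (∃ w, Represents u w (Finset.Icc 1 n) E) ↔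
      (∃ w, Represents (u.map (fun x => 3 - x)) w (Finset.Icc 1 n)
        (fun x y => E (n + 1 - x) (n + 1 - y))) := by
  have hne : u ≠ [] := by
    intro h; rw [h] at hlen; simp at hlen
  constructor
  · exact dir n u hu hne E
  · intro h
    have huc : ∀ x ∈ u.map (fun x => 3 - x), x = 1 ∨ x = 2 := by
      intro x hx
      rcases List.mem_map.1 hx with ⟨y, hy, rfl⟩
      rcases hu y hy with rfl | rfl
      · right; rfl
      · left; rfl
    have hnec : u.map (fun x => 3 - x) ≠ [] := by
      simpa using hne
    have h2 := dir n (u.map (fun x => 3 - x)) huc hnec _ h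
    rw [double_comp u hu] at h2
    obtain ⟨w, hw⟩ := h2
    refine ⟨w, represents_congr _ _ _ _ _ ?_ hw⟩
    intro x hxm y hym
    simp only [Finset.mem_Icc] at hxm hym
    have h1 : n + 1 - (n + 1 - x) = x := by omega
    have h2 : n + 1 - (n + 1 - y) = y := by omega
    rw [h1, h2]
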